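/- Let F : X → H be a continuous frame for a separable complex Hilbert space H with respect to a measure space (X, μ) with σ-finite positive measure, and let (e_k)_{k∈K} be an orthonormal basis of H. (i) If V : L²(X, μ) → H is a bounded operator with V T_F^* = Id_H such that (ker V)^⊥ is a reproducing kernel Hilbert subspace of L²(X, μ), then the function G(x) := ∑_{k∈K} conj((V^* e_k)(x)) e_k is well defined μ-a.e. and is a dual frame of F. (ii) Conversely, if G₀ is any dual frame of F, then with V = T_{G₀} one has V T_F^* = Id_H, (ker V)^⊥ = range(T_{G₀}^*) is a reproducing kernel Hilbert subspace of L²(X, μ), and G₀(x) = ∑_{k∈K} conj((V^* e_k)(x)) e_k for μ-a.e. x ∈ X. -/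

import Mathlib

open MeasureTheory ENNReal

noncomputable section

namespace ContFrame

variable {X : Type*} {H : Type*}

/-- The paper's inner product `⟨f, g⟩`: linear in the first argument and
conjugate-linear in the second (Mathlib's `inner` is conjugate-linear in the first). -/
def pinner [NormedAddCommGroup H] [InnerProductSpace ℂ H] (f g : H) : ℂ :=
  @inner ℂ _ _ g f

/-- `∫_X |⟨f, F x⟩|² dμ(x)`, as a lower integral. -/
def frameInt [MeasurableSpace X] [NormedAddCommGroup H] [InnerProductSpace ℂ H]
    (μ : Measure X) (F : X → H) (f : H) : ℝ≥0∞ :=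
  ∫⁻ x, (‖pinner f (F x)‖₊ : ℝ≥0∞) ^ 2 ∂μ

/-- `F` is weakly measurable: `x ↦ ⟨f, F x⟩` is μ-measurable for every `f`. -/
def WeaklyMeasurable [MeasurableSpace X] [NormedAddCommGroup H] [InnerProductSpace ℂ H]
    (μ : Measure X) (F : X → H) : Prop :=
  ∀ f : H, AEMeasurable (fun x => pinner f (F x)) μ

/-- `F` is a Bessel mapping for `H` w.r.t. `(X, μ)` with Bessel bound `B < ∞`. -/
def IsBesselMapping [MeasurableSpace X] [NormedAddCommGroup H] [InnerProductSpace ℂ H]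
    (μ : Measure X) (F : X → H) (B : ℝ≥0∞) : Prop :=
  B < ⊤ ∧ WeaklyMeasurable μ F ∧
    ∀ f : H, frameInt μ F f ≤ B * (‖f‖₊ : ℝ≥0∞) ^ 2

/-- `F` is a continuous frame for `H` w.r.t. `(X, μ)` with frame bounds `0 < A ≤ B < ∞`:
`A ‖f‖² ≤ ∫_X |⟨f, F x⟩|² dμ(x) ≤ B ‖f‖²` for all `f ∈ H`. -/
def IsContinuousFrame [MeasurableSpace X] [NormedAddCommGroup H] [InnerProductSpace ℂ H]
    (μ : Measure X) (F : X → H) (A B : ℝ≥0∞) : Prop :=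
  0 < A ∧ A ≤ B ∧ B < ⊤ ∧ WeaklyMeasurable μ F ∧
    ∀ f : H, A * (‖f‖₊ : ℝ≥0∞) ^ 2 ≤ frameInt μ F f ∧
      frameInt μ F f ≤ B * (‖f‖₊ : ℝ≥0∞) ^ 2

/-- A realization of the Hilbert tensor product `H = H₁ ⊗ H₂`: a bilinear map
`tmul` whose simple tensors satisfy `⟪a⊗b, c⊗d⟫ = ⟪a,c⟫⟪b,d⟫` and span a dense subspace. -/
structure HilbertTensorProduct (H₁ H₂ H : Type*)
    [NormedAddCommGroup H₁] [InnerProductSpace ℂ H₁]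
    [NormedAddCommGroup H₂] [InnerProductSpace ℂ H₂]
    [NormedAddCommGroup H] [InnerProductSpace ℂ H] where
  tmul : H₁ →ₗ[ℂ] H₂ →ₗ[ℂ] H
  inner_tmul : ∀ (a c : H₁) (b d : H₂),
    (inner ℂ (tmul a b) (tmul c d) : ℂ) = (inner ℂ a c : ℂ) * (inner ℂ b d : ℂ)
  dense_span : Dense (↑(Submodule.span ℂ {z : H | ∃ a b, z = tmul a b}) : Set H)

/-- `T : L²(X,μ) → H` is the synthesis operator of `F`, characterized by the fact
that its adjoint is the analysis operator `(T^* f)(x) = ⟨f, F x⟩`. -/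
def IsSynthesisOperator {X H : Type*} [MeasurableSpace X]
    [NormedAddCommGroup H] [InnerProductSpace ℂ H] [CompleteSpace H]
    (μ : Measure X) (F : X → H) (T : Lp ℂ 2 μ →L[ℂ] H) : Prop :=
  ∀ f : H, (ContinuousLinearMap.adjoint T f : X → ℂ) =ᵐ[μ] fun x => pinner f (F x)

/-- `G` is a dual frame of the continuous frame `F`:
`⟨f, g⟩ = ∫_X ⟨f, F x⟩ ⟨G x, g⟩ dμ(x)` for all `f, g ∈ H`. -/
def IsDualFrame {X H : Type*} [MeasurableSpace X]
    [NormedAddCommGroup H] [InnerProductSpace ℂ H]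
    (μ : Measure X) (F G : X → H) : Prop :=
  (∃ A B, IsContinuousFrame μ G A B) ∧
    ∀ f g : H, pinner f g = ∫ x, pinner f (F x) * pinner (G x) g ∂μ

/-- A subspace `S` of `L²(X, μ)` is a reproducing kernel Hilbert subspace: there is a
kernel map `k : X → L²` with values in `S` such that every `f ∈ S` is represented by
the function `x ↦ ⟨f, k_x⟩` (in particular, evaluations are bounded on `S`). -/
def IsRKHS {X : Type*} [MeasurableSpace X] (μ : Measure X)
    (S : Submodule ℂ (Lp ℂ 2 μ)) : Prop :=
  ∃ k : X → Lp ℂ 2 μ, (∀ x, k x ∈ S) ∧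
    ∀ f ∈ S, (f : X → ℂ) =ᵐ[μ] fun x => pinner f (k x)

section Aux

variable [MeasurableSpace X] {μ : MeasureTheory.Measure X}
variable [NormedAddCommGroup H] [InnerProductSpace ℂ H] [CompleteSpace H]

omit [CompleteSpace H] in
lemma conj_pinner (f g : H) : (starRingEnd ℂ) (pinner f g) = pinner g f :=
  inner_conj_symm f g

lemma inner_L2_congr (u v : Lp ℂ 2 μ) {a b : X → ℂ}
    (ha : (u : X → ℂ) =ᵐ[μ] a) (hb : (v : X → ℂ) =ᵐ[μ] b) :
    (inner ℂ u v : ℂ) = ∫ x, (starRingEnd ℂ) (a x) * b x ∂μ := by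
  rw [MeasureTheory.L2.inner_def]
  refine integral_congr_ae ?_
  filter_upwards [ha, hb] with x hx hy
  rw [RCLike.inner_apply, hx, hy, mul_comm]

lemma lintegral_nnnorm_sq (u : Lp ℂ 2 μ) :
    ∫⁻ x, (‖u x‖₊ : ℝ≥0∞) ^ 2 ∂μ = (‖u‖₊ : ℝ≥0∞) ^ 2 := by
  have h1 : ((‖u‖₊ : ℝ≥0∞)) = eLpNorm u 2 μ := by
    rw [Lp.nnnorm_def, ENNReal.coe_toNNReal (Lp.eLpNorm_ne_top u)]
  rw [h1, eLpNorm_eq_lintegral_rpow_enorm_toReal two_ne_zero ENNReal.ofNat_ne_top]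
  simp only [enorm_eq_nnnorm]
  have h2 : (2 : ℝ≥0∞).toReal = 2 := by simp
  rw [h2, ← ENNReal.rpow_natCast _ 2, ← ENNReal.rpow_mul]
  norm_num

/-- If the analysis-type operator `W = adjoint V` represents `pinner · (G x)` a.e.,
and `TF ∘ V† = id`, then `G` is a continuous frame. -/
lemma frame_of_rep (μ : Measure X) (G : X → H)
    (V : Lp ℂ 2 μ →L[ℂ] H) (TF : Lp ℂ 2 μ →L[ℂ] H)
    (hVT : TF.comp (ContinuousLinearMap.adjoint V) = ContinuousLinearMap.id ℂ H)
    (hrep : ∀ f : H, ((ContinuousLinearMap.adjoint V f : Lp ℂ 2 μ) : X → ℂ)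
      =ᵐ[μ] fun x => pinner f (G x)) :
    ∃ A B, IsContinuousFrame μ G A B := by
  set V' := ContinuousLinearMap.adjoint V with hV'
  set c : NNReal := max 1 ‖TF‖₊ with hc
  have hc1 : (1 : ℝ≥0∞) ≤ (c : ℝ≥0∞) := by
    rw [hc]; exact_mod_cast le_max_left 1 ‖TF‖₊
  have hcsq : (1 : ℝ≥0∞) ≤ (c : ℝ≥0∞) ^ 2 := by
    calc (1 : ℝ≥0∞) = 1 ^ 2 := (one_pow 2).symm
      _ ≤ (c : ℝ≥0∞) ^ 2 := by gcongr
  have hcne : ((c : ℝ≥0∞) ^ 2) ≠ 0 := by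
    intro h; rw [h] at hcsq; simp at hcsq
  have hcnt : ((c : ℝ≥0∞) ^ 2) ≠ ⊤ := ENNReal.pow_ne_top ENNReal.coe_ne_top
  refine ⟨((c : ℝ≥0∞) ^ 2)⁻¹, max (((c : ℝ≥0∞) ^ 2)⁻¹) ((‖V'‖₊ : ℝ≥0∞) ^ 2),
    ENNReal.inv_pos.mpr hcnt, le_max_left _ _, ?_, ?_, ?_⟩
  · exact max_lt (lt_of_le_of_lt (ENNReal.inv_le_one.mpr hcsq) (by norm_num)) (ENNReal.pow_ne_top ENNReal.coe_ne_top).lt_top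
  · intro f
    exact ((Lp.aestronglyMeasurable (V' f)).aemeasurable).congr (hrep f)
  · intro f
    have hfr : frameInt μ G f = (‖V' f‖₊ : ℝ≥0∞) ^ 2 := by
      rw [frameInt, ← lintegral_nnnorm_sq (V' f)]
      refine lintegral_congr_ae ?_
      filter_upwards [hrep f] with x hx
      rw [hx]
    constructor
    · rw [hfr]
      have h2 : TF (V' f) = f := by
        simpa using ContinuousLinearMap.ext_iff.mp hVT f
      have h1 : (‖f‖₊ : ℝ≥0∞) ≤ (c : ℝ≥0∞) * ‖V' f‖₊ := by
        calc (‖f‖₊ : ℝ≥0∞) = (‖TF (V' f)‖₊ : ℝ≥0∞) := by rw [h2]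
          _ ≤ (‖TF‖₊ : ℝ≥0∞) * ‖V' f‖₊ := by exact_mod_cast TF.le_opNNNorm _
          _ ≤ (c : ℝ≥0∞) * ‖V' f‖₊ := by
              gcongr
              exact_mod_cast le_max_right 1 ‖TF‖₊
      calc ((c : ℝ≥0∞) ^ 2)⁻¹ * (‖f‖₊ : ℝ≥0∞) ^ 2
          ≤ ((c : ℝ≥0∞) ^ 2)⁻¹ * ((c : ℝ≥0∞) * ‖V' f‖₊) ^ 2 := by gcongr
        _ = (((c : ℝ≥0∞) ^ 2)⁻¹ * ((c : ℝ≥0∞) ^ 2)) * (‖V' f‖₊ : ℝ≥0∞) ^ 2 := by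
            rw [mul_pow]; ring
        _ = (‖V' f‖₊ : ℝ≥0∞) ^ 2 := by
            rw [ENNReal.inv_mul_cancel hcne hcnt, one_mul]
    · rw [hfr]
      calc (‖V' f‖₊ : ℝ≥0∞) ^ 2 ≤ ((‖V'‖₊ : ℝ≥0∞) * ‖f‖₊) ^ 2 := by
            gcongr
            exact_mod_cast V'.le_opNNNorm f
        _ = (‖V'‖₊ : ℝ≥0∞) ^ 2 * (‖f‖₊ : ℝ≥0∞) ^ 2 := mul_pow _ _ _
        _ ≤ max (((c : ℝ≥0∞) ^ 2)⁻¹) ((‖V'‖₊ : ℝ≥0∞) ^ 2) * (‖f‖₊ : ℝ≥0∞) ^ 2 := by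
            gcongr
            exact le_max_right _ _

end Aux

/-- Let `F` be a continuous frame for `H`, `(e_k)` an orthonormal basis.
(i) If `V : L²(X,μ) → H` is a bounded left inverse of the analysis operator `T_F^*` with
`(ker V)^⊥` an RKHS, then `G(x) = ∑_k conj((V^* e_k)(x)) e_k` is defined a.e. and is a
dual frame of `F`. (ii) Conversely, every dual frame `G₀` of `F` arises this way from
`V = T_{G₀}`, whose kernel's orthocomplement `(ker V)^⊥ = range T_{G₀}^*` is an RKHS. -/
theorem dual_frames_from_left_inverses
    {X H K : Type*} [MeasurableSpace X]
    [NormedAddCommGroup H] [InnerProductSpace ℂ H] [CompleteSpace H]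
      [TopologicalSpace.SeparableSpace H]
    [Countable K]
    (μ : Measure X) [SigmaFinite μ]
    (F : X → H) (A B : ℝ≥0∞) (hF : IsContinuousFrame μ F A B)
    (TF : Lp ℂ 2 μ →L[ℂ] H) (hTF : IsSynthesisOperator μ F TF)
    (e : HilbertBasis K ℂ H) :
    -- (i)
    (∀ V : Lp ℂ 2 μ →L[ℂ] H,
      V.comp (ContinuousLinearMap.adjoint TF) = ContinuousLinearMap.id ℂ H →
      IsRKHS μ (LinearMap.ker (V : Lp ℂ 2 μ →ₗ[ℂ] H))ᗮ →
      ∃ G : X → H,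
        (∀ᵐ x ∂μ, HasSum
          (fun k => (starRingEnd ℂ) ((ContinuousLinearMap.adjoint V (e k)) x) • (e k : H))
          (G x)) ∧
        IsDualFrame μ F G) ∧
    -- (ii)
    (∀ G₀ : X → H, IsDualFrame μ F G₀ →
      ∀ TG : Lp ℂ 2 μ →L[ℂ] H, IsSynthesisOperator μ G₀ TG →
        TG.comp (ContinuousLinearMap.adjoint TF) = ContinuousLinearMap.id ℂ H ∧
        (LinearMap.ker (TG : Lp ℂ 2 μ →ₗ[ℂ] H))ᗮ =
          LinearMap.range (ContinuousLinearMap.adjoint TG : H →ₗ[ℂ] Lp ℂ 2 μ) ∧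
        IsRKHS μ (LinearMap.ker (TG : Lp ℂ 2 μ →ₗ[ℂ] H))ᗮ ∧
        ∀ᵐ x ∂μ, HasSum
          (fun k => (starRingEnd ℂ) ((ContinuousLinearMap.adjoint TG (e k)) x) • (e k : H))
          (G₀ x)) := by
  constructor
  · -- (i)
    intro V hV hR
    obtain ⟨κ, hκ1, hκ2⟩ := hR
    set V' := ContinuousLinearMap.adjoint V with hV'
    have hVT : TF.comp V' = ContinuousLinearMap.id ℂ H := by
      have h := congrArg ContinuousLinearMap.adjoint hV
      rwa [ContinuousLinearMap.adjoint_comp, ContinuousLinearMap.adjoint_adjoint,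
        ContinuousLinearMap.adjoint_id] at h
    have hrange : ∀ f : H, V' f ∈ (LinearMap.ker (V : Lp ℂ 2 μ →ₗ[ℂ] H))ᗮ := by
      intro f
      rw [Submodule.mem_orthogonal]
      intro u hu
      rw [hV', ContinuousLinearMap.adjoint_inner_right]
      have hu0 : V u = 0 := hu
      rw [hu0, inner_zero_left]
    have hrep : ∀ f : H, ((V' f : Lp ℂ 2 μ) : X → ℂ) =ᵐ[μ] fun x => pinner f (V (κ x)) := by
      intro f
      refine (hκ2 _ (hrange f)).trans (Filter.Eventually.of_forall fun x => ?_)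
      show pinner (V' f) (κ x) = pinner f (V (κ x))
      simp only [pinner, hV']
      exact ContinuousLinearMap.adjoint_inner_right V (κ x) f
    refine ⟨fun x => V (κ x), ?_, ?_, ?_⟩
    · -- a.e. HasSum
      have hae : ∀ᵐ x ∂μ, ∀ j : K, ((V' (e j) : Lp ℂ 2 μ) : X → ℂ) x
          = pinner (e j) (V (κ x)) := ae_all_iff.mpr fun j => hrep (e j)
      filter_upwards [hae] with x hx
      have heq : (fun j : K => (starRingEnd ℂ) (((V' (e j) : Lp ℂ 2 μ) : X → ℂ) x) • (e j : H))
          = fun j => e.repr (V (κ x)) j • e j := by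
        funext j
        rw [hx j, e.repr_apply_apply]
        congr 1
        exact conj_pinner (e j) (V (κ x))
      exact heq ▸ e.hasSum_repr (V (κ x))
    · -- continuous frame
      exact frame_of_rep μ _ V TF hVT hrep
    · -- dual identity
      intro f g
      have h1 : (inner ℂ (V' g) (ContinuousLinearMap.adjoint TF f) : ℂ)
          = ∫ x, pinner f (F x) * pinner ((fun x => V (κ x)) x) g ∂μ := by
        rw [inner_L2_congr _ _ (hrep g) (hTF f)]
        refine integral_congr_ae (Filter.Eventually.of_forall fun x => ?_)
        simp only [conj_pinner]
        ring
      rw [← h1, hV', ContinuousLinearMap.adjoint_inner_left]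
      have h2 : V ((ContinuousLinearMap.adjoint TF) f) = f := by
        simpa using ContinuousLinearMap.ext_iff.mp hV f
      rw [h2]
      rfl
  · -- (ii)
    intro G₀ hG₀ TG hTG
    obtain ⟨-, hdual⟩ := hG₀
    set TG' := ContinuousLinearMap.adjoint TG with hTG'
    have hcomp : TG.comp (ContinuousLinearMap.adjoint TF) = ContinuousLinearMap.id ℂ H := by
      ext f
      apply ext_inner_left ℂ
      intro g
      simp only [ContinuousLinearMap.comp_apply, ContinuousLinearMap.id_apply]
      rw [← ContinuousLinearMap.adjoint_inner_left TG]
      rw [inner_L2_congr _ _ (hTG g) (hTF f)]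
      have h2 : ∫ x, (starRingEnd ℂ) (pinner g (G₀ x)) * pinner f (F x) ∂μ
          = ∫ x, pinner f (F x) * pinner (G₀ x) g ∂μ :=
        integral_congr_ae (Filter.Eventually.of_forall fun x => by
          simp only [conj_pinner]; ring)
      rw [h2, ← hdual f g]
      rfl
    have hflip : TF.comp TG' = ContinuousLinearMap.id ℂ H := by
      have h := congrArg ContinuousLinearMap.adjoint hcomp
      rwa [ContinuousLinearMap.adjoint_comp, ContinuousLinearMap.adjoint_adjoint,
        ContinuousLinearMap.adjoint_id] at h
    have hflip' : ∀ h : H, TF (TG' h) = h := by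
      intro h
      simpa using ContinuousLinearMap.ext_iff.mp hflip h
    have hrange_ker : LinearMap.range (TG' : H →ₗ[ℂ] Lp ℂ 2 μ)
        = LinearMap.ker ((ContinuousLinearMap.id ℂ (Lp ℂ 2 μ) - TG'.comp TF) : Lp ℂ 2 μ →ₗ[ℂ] Lp ℂ 2 μ) := by
      ext u
      simp only [LinearMap.mem_range, LinearMap.mem_ker, ContinuousLinearMap.coe_sub',
        Pi.sub_apply, ContinuousLinearMap.coe_id', id_eq, ContinuousLinearMap.coe_comp',
        Function.comp_apply, sub_eq_zero, LinearMap.sub_apply, ContinuousLinearMap.coe_coe,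
        ContinuousLinearMap.id_apply, ContinuousLinearMap.comp_apply]
      constructor
      · rintro ⟨h, rfl⟩
        rw [hflip' h]
      · intro hu
        exact ⟨TF u, hu.symm⟩
    have horto : (LinearMap.ker (TG : Lp ℂ 2 μ →ₗ[ℂ] H))ᗮ = LinearMap.range (TG' : H →ₗ[ℂ] Lp ℂ 2 μ) := by
      have hker : LinearMap.ker (TG : Lp ℂ 2 μ →ₗ[ℂ] H) = (LinearMap.range (TG' : H →ₗ[ℂ] Lp ℂ 2 μ))ᗮ := by
        ext u
        rw [LinearMap.mem_ker, Submodule.mem_orthogonal]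
        constructor
        · intro hu v hv
          obtain ⟨h, rfl⟩ := hv
          rw [ContinuousLinearMap.coe_coe, hTG', ContinuousLinearMap.adjoint_inner_left, (show TG u = 0 from hu), inner_zero_right]
        · intro hu
          have h := hu (TG' (TG u)) ⟨TG u, rfl⟩
          rw [hTG', ContinuousLinearMap.adjoint_inner_left, inner_self_eq_zero] at h
          exact h
      rw [hker, Submodule.orthogonal_orthogonal_eq_closure]
      apply IsClosed.submodule_topologicalClosure_eq
      rw [hrange_ker]
      exact ContinuousLinearMap.isClosed_ker (ContinuousLinearMap.id ℂ (Lp ℂ 2 μ) - TG'.comp TF)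
    have hS : IsRKHS μ (LinearMap.ker (TG : Lp ℂ 2 μ →ₗ[ℂ] H))ᗮ := by
      haveI : CompleteSpace (LinearMap.ker (TG : Lp ℂ 2 μ →ₗ[ℂ] H)) :=
        (ContinuousLinearMap.isClosed_ker TG).completeSpace_coe
      refine ⟨fun x => (Submodule.orthogonalProjectionOnto (LinearMap.ker (TG : Lp ℂ 2 μ →ₗ[ℂ] H))ᗮ
        ((ContinuousLinearMap.adjoint TF) (G₀ x)) : Lp ℂ 2 μ),
        fun x => Submodule.coe_mem _, ?_⟩
      intro f hf
      have hf' : f ∈ LinearMap.range (TG' : H →ₗ[ℂ] Lp ℂ 2 μ) := by rw [← horto]; exact hf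
      obtain ⟨h, rfl⟩ := hf'
      refine (hTG h).trans (Filter.Eventually.of_forall fun x => ?_)
      simp only [pinner]
      have hmem : (TG' h) ∈ (LinearMap.ker (TG : Lp ℂ 2 μ →ₗ[ℂ] H))ᗮ := by
        rw [horto]; exact ⟨h, rfl⟩
      have h0 := Submodule.starProjection_inner_eq_zero
        ((ContinuousLinearMap.adjoint TF) (G₀ x)) (TG' h) hmem
      have h1 : (inner ℂ ((Submodule.orthogonalProjectionOnto (LinearMap.ker (TG : Lp ℂ 2 μ →ₗ[ℂ] H))ᗮ
            ((ContinuousLinearMap.adjoint TF) (G₀ x)) : Lp ℂ 2 μ)) (TG' h) : ℂ)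
          = inner ℂ ((ContinuousLinearMap.adjoint TF) (G₀ x)) (TG' h) := by
        have h0' : (inner ℂ ((ContinuousLinearMap.adjoint TF) (G₀ x)) (TG' h) : ℂ)
            - inner ℂ ((Submodule.orthogonalProjectionOnto (LinearMap.ker (TG : Lp ℂ 2 μ →ₗ[ℂ] H))ᗮ
              ((ContinuousLinearMap.adjoint TF) (G₀ x)) : Lp ℂ 2 μ)) (TG' h) = 0 := by
          rw [← inner_sub_left]; exact h0
        exact (sub_eq_zero.mp h0').symm
      rw [ContinuousLinearMap.coe_coe, h1, ContinuousLinearMap.adjoint_inner_left, hflip' h]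
    refine ⟨hcomp, horto, hS, ?_⟩
    have hae : ∀ᵐ x ∂μ, ∀ j : K, ((TG' (e j) : Lp ℂ 2 μ) : X → ℂ) x
        = pinner (e j) (G₀ x) := ae_all_iff.mpr fun j => hTG (e j)
    filter_upwards [hae] with x hx
    have heq : (fun j : K => (starRingEnd ℂ) (((TG' (e j) : Lp ℂ 2 μ) : X → ℂ) x) • (e j : H))
        = fun j => e.repr (G₀ x) j • e j := by
      funext j
      rw [hx j, e.repr_apply_apply]
      congr 1
      exact conj_pinner (e j) (G₀ x)
    exact heq ▸ e.hasSum_repr (G₀ x)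

end ContFrame
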